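/- Let a₁, a₂, a₃ and b₁, b₂, b₃ be real numbers and let A, B be the 3×3 Vandermonde matrices with rows (1,1,1), (a₁,a₂,a₃), (a₁²,a₂²,a₃²) and (1,1,1), (b₁,b₂,b₃), (b₁²,b₂²,b₃²) respectively. Suppose A and B are invertible and the linear map F = A⁻¹B maps the standard 2-simplex {(x,y,z) : x,y,z ≥ 0, x+y+z = 1} bijectively onto itself. Then F is a permutation matrix; equivalently, (b₁,b₂,b₃) is a permutation of (a₁,a₂,a₃). -/
import Mathlib


open Matrix

lemma perm_aux (F G : Matrix (Fin 3) (Fin 3) ℝ)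
    (hGF : G * F = 1)
    (hF : ∀ i j, 0 ≤ F i j) (hG : ∀ i j, 0 ≤ G i j)
    (hFsum : ∀ j, ∑ i, F i j = 1) :
    ∃ σ : Equiv.Perm (Fin 3), ∀ i j, F i j = if σ j = i then 1 else 0 := by
  have hzero : ∀ j j' : Fin 3, j ≠ j' → ∀ x, G j x * F x j' = 0 := by
    intro j j' hne x
    have h0 : ∑ y, G j y * F y j' = 0 := by
      have := congrArg (fun M => M j j') hGF
      simpa [Matrix.mul_apply, Matrix.one_apply, hne] using this
    exact (Finset.sum_eq_zero_iff_of_nonneg (fun y _ =>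
      mul_nonneg (hG j y) (hF y j'))).mp h0 x (Finset.mem_univ x)
  have hdiag : ∀ j, ∃ x, 0 < G j x ∧ 0 < F x j := by
    intro j
    by_contra h
    push_neg at h
    have h1 : (G * F) j j = 0 := by
      rw [Matrix.mul_apply]
      apply Finset.sum_eq_zero
      intro x _
      rcases lt_or_eq_of_le (hG j x) with hx | hx
      · have := h x hx
        have : F x j = 0 := le_antisymm this (hF x j)
        simp [this]
      · simp [← hx]
    rw [hGF] at h1
    simp [Matrix.one_apply] at h1
  choose k hk1 hk2 using hdiag
  have hinj : Function.Injective k := by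
    intro j j' hkk
    by_contra hne
    have h0 := hzero j j' hne (k j')
    have hpos : 0 < G j (k j') * F (k j') j' := mul_pos (hkk ▸ hk1 j) (hk2 j')
    exact absurd h0 (ne_of_gt hpos)
  have hbij : Function.Bijective k := Finite.injective_iff_bijective.mp hinj
  let σ : Equiv.Perm (Fin 3) := Equiv.ofBijective k hbij
  have hσ : ∀ j, σ j = k j := fun j => rfl
  have hoff : ∀ i j, i ≠ k j → F i j = 0 := by
    intro i j hne
    obtain ⟨j'', rfl⟩ := hbij.2 i
    have hjj : j'' ≠ j := fun h => hne (congrArg k h)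
    have h0 := hzero j'' j hjj (k j'')
    rcases mul_eq_zero.mp h0 with h | h
    · exact absurd h (ne_of_gt (hk1 j''))
    · exact h
  have hdiag1 : ∀ j, F (k j) j = 1 := by
    intro j
    have := hFsum j
    rwa [Finset.sum_eq_single (k j) (fun i _ hi => hoff i j hi)
      (fun h => absurd (Finset.mem_univ _) h)] at this
  refine ⟨σ, fun i j => ?_⟩
  rw [hσ]
  by_cases h : k j = i
  · rw [if_pos h, ← h]
    exact hdiag1 j
  · rw [if_neg h]
    exact hoff i j (fun hh => h hh.symm)

/-- if the Vandermonde matrices A and B are invertible and F = A⁻¹B maps the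
standard 2-simplex bijectively onto itself, then F is a permutation matrix and the bⱼ are a
permutation of the aⱼ. -/
theorem stmt12 (a b : Fin 3 → ℝ) (A B : Matrix (Fin 3) (Fin 3) ℝ)
    (hA : A = Matrix.of fun (i j : Fin 3) => a j ^ (i : ℕ))
    (hB : B = Matrix.of fun (i j : Fin 3) => b j ^ (i : ℕ))
    (hAdet : IsUnit A.det) (hBdet : IsUnit B.det)
    (hbij : Set.BijOn (fun x => (A⁻¹ * B).mulVec x)
      {x : Fin 3 → ℝ | (∀ i, 0 ≤ x i) ∧ ∑ i, x i = 1}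
      {x : Fin 3 → ℝ | (∀ i, 0 ≤ x i) ∧ ∑ i, x i = 1}) :
    ∃ σ : Equiv.Perm (Fin 3), (∀ j, b j = a (σ j)) ∧
      ∀ i j, (A⁻¹ * B) i j = if σ j = i then 1 else 0 := by
  set F := A⁻¹ * B with hF
  set G := B⁻¹ * A with hG
  have hGF : G * F = 1 := by
    rw [hG, hF, Matrix.mul_assoc, ← Matrix.mul_assoc A,
      Matrix.mul_nonsing_inv _ hAdet, Matrix.one_mul, Matrix.nonsing_inv_mul _ hBdet]
  -- G maps the simplex into itself
  have hGmap : ∀ x : Fin 3 → ℝ, x ∈ {x : Fin 3 → ℝ | (∀ i, 0 ≤ x i) ∧ ∑ i, x i = 1} →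
      G.mulVec x ∈ {x : Fin 3 → ℝ | (∀ i, 0 ≤ x i) ∧ ∑ i, x i = 1} := by
    intro x hx
    obtain ⟨y, hy, hyx⟩ := hbij.surjOn hx
    have : G.mulVec x = y := by
      rw [← hyx]
      show G.mulVec (F.mulVec y) = y
      rw [Matrix.mulVec_mulVec, hGF, Matrix.one_mulVec]
    rw [this]; exact hy
  -- standard basis vectors lie in the simplex
  have hej : ∀ j : Fin 3, (Pi.single j 1 : Fin 3 → ℝ) ∈
      {x : Fin 3 → ℝ | (∀ i, 0 ≤ x i) ∧ ∑ i, x i = 1} := by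
    intro j
    constructor
    · intro i
      rcases eq_or_ne i j with rfl | h
      · simp
      · simp [Pi.single_apply, h]
    · simp
  have hcol : ∀ (M : Matrix (Fin 3) (Fin 3) ℝ) (j : Fin 3),
      M.mulVec (Pi.single j 1) = fun i => M i j := by
    intro M j
    funext i
    simp [Matrix.mulVec, dotProduct, Pi.single_apply]
  have hFpos : ∀ i j, 0 ≤ F i j := by
    intro i j
    have := (hbij.mapsTo (hej j)).1 i
    simpa only [hcol] using this
  have hFsum : ∀ j, ∑ i, F i j = 1 := by
    intro j
    have := (hbij.mapsTo (hej j)).2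
    simpa only [hcol] using this
  have hGpos : ∀ i j, 0 ≤ G i j := by
    intro i j
    have := (hGmap _ (hej j)).1 i
    rwa [hcol G j] at this
  obtain ⟨σ, hσ⟩ := perm_aux F G hGF hFpos hGpos hFsum
  refine ⟨σ, ?_, hσ⟩
  -- B = A * F
  have hBAF : B = A * F := by
    rw [hF, ← Matrix.mul_assoc, Matrix.mul_nonsing_inv _ hAdet, Matrix.one_mul]
  intro j
  have h1 : B 1 j = A 1 (σ j) := by
    rw [hBAF, Matrix.mul_apply]
    rw [Finset.sum_congr rfl (fun k _ => by rw [hσ k j])]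
    simp
  rw [hA, hB] at h1
  simpa using h1
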